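/- arXiv:1605.00868 — 2 statements merged into one kernel-verified Lean document; each statement's English description precedes it below -/
import Mathlib

section
/- Let H ∈ (0,1) and let (B_t)_{t∈ℝ} be a family of square-integrable real-valued random variables on a probability space (Ω, F, P) with fBm covariance structure with Hurst index H, i.e. E[B_s B_t] = K_H(s,t) = (|s|^{2H} + |t|^{2H} − |s−t|^{2H})/2 for all s, t ∈ ℝ. Then for every Δ > 0 and all integers i, j, writing h = i − j, E[(B_{iΔ} − 2B_{(i−1)Δ} + B_{(i−2)Δ})(B_{jΔ} − 2B_{(j−2)Δ} + B_{(j−4)Δ})] = (Δ^{2H}/2)·(−|h−2|^{2H} + 2|h−1|^{2H} + |h|^{2H} − 4|h+1|^{2H} + |h+2|^{2H} + 2|h+3|^{2H} − |h+4|^{2H}). -/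
open MeasureTheory

/-- Cross-covariance of the lag-1 and lag-2 second-order increments of a process
with fBm covariance structure with Hurst index `H`. -/
theorem fbm_lag1_lag2_secondOrder_increment_crossCov
    {Ω : Type*} [MeasurableSpace Ω] (P : Measure Ω) [IsProbabilityMeasure P]
    (H : ℝ) (hH : H ∈ Set.Ioo (0 : ℝ) 1)
    (B : ℝ → Ω → ℝ)
    (hL2 : ∀ t : ℝ, MemLp (B t) 2 P)
    (hcov : ∀ s t : ℝ, ∫ ω, B s ω * B t ω ∂P
      = (|s| ^ (2 * H) + |t| ^ (2 * H) - |s - t| ^ (2 * H)) / 2)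
    (Δ : ℝ) (hΔ : 0 < Δ) (i j : ℤ) :
    ∫ ω, (B ((i : ℝ) * Δ) ω - 2 * B (((i : ℝ) - 1) * Δ) ω + B (((i : ℝ) - 2) * Δ) ω)
        * (B ((j : ℝ) * Δ) ω - 2 * B (((j : ℝ) - 2) * Δ) ω + B (((j : ℝ) - 4) * Δ) ω) ∂P
      = Δ ^ (2 * H) / 2 *
        (-(|((i : ℝ) - (j : ℝ)) - 2| ^ (2 * H))
          + 2 * |((i : ℝ) - (j : ℝ)) - 1| ^ (2 * H)
          + |(i : ℝ) - (j : ℝ)| ^ (2 * H)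
          - 4 * |((i : ℝ) - (j : ℝ)) + 1| ^ (2 * H)
          + |((i : ℝ) - (j : ℝ)) + 2| ^ (2 * H)
          + 2 * |((i : ℝ) - (j : ℝ)) + 3| ^ (2 * H)
          - |((i : ℝ) - (j : ℝ)) + 4| ^ (2 * H)) := by
  have hI : ∀ x y : ℝ, Integrable (fun ω => B x ω * B y ω) P := by
    intro x y
    have h : MemLp (B x • B y) 1 P := by
      exact (hL2 y).smul (hL2 x)
    rw [memLp_one_iff_integrable] at h
    exact h
  have key : ∀ x y : ℝ, ∫ ω, B (x * Δ) ω * B (y * Δ) ω ∂P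
      = (|x| ^ (2 * H) * Δ ^ (2 * H) + |y| ^ (2 * H) * Δ ^ (2 * H)
          - |x - y| ^ (2 * H) * Δ ^ (2 * H)) / 2 := by
    intro x y
    rw [hcov]
    have h1 : ∀ z : ℝ, |z * Δ| ^ (2 * H) = |z| ^ (2 * H) * Δ ^ (2 * H) := by
      intro z
      rw [abs_mul, abs_of_pos hΔ, Real.mul_rpow (abs_nonneg z) hΔ.le]
    have h2 : x * Δ - y * Δ = (x - y) * Δ := by ring
    rw [h2, h1, h1, h1]
  set a := (i : ℝ)
  set b := (j : ℝ)
  have hfun : (fun ω => (B (a * Δ) ω - 2 * B ((a - 1) * Δ) ω + B ((a - 2) * Δ) ω)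
        * (B (b * Δ) ω - 2 * B ((b - 2) * Δ) ω + B ((b - 4) * Δ) ω))
      = fun ω =>
        B (a * Δ) ω * B (b * Δ) ω
        - 2 * (B (a * Δ) ω * B ((b - 2) * Δ) ω)
        + B (a * Δ) ω * B ((b - 4) * Δ) ω
        - 2 * (B ((a - 1) * Δ) ω * B (b * Δ) ω)
        + 4 * (B ((a - 1) * Δ) ω * B ((b - 2) * Δ) ω)
        - 2 * (B ((a - 1) * Δ) ω * B ((b - 4) * Δ) ω)
        + B ((a - 2) * Δ) ω * B (b * Δ) ω
        - 2 * (B ((a - 2) * Δ) ω * B ((b - 2) * Δ) ω)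
        + B ((a - 2) * Δ) ω * B ((b - 4) * Δ) ω := by
    funext ω; ring
  rw [hfun]
  have H1 := hI (a * Δ) (b * Δ)
  have H2 := (hI (a * Δ) ((b - 2) * Δ)).const_mul (2 : ℝ)
  have H3 := hI (a * Δ) ((b - 4) * Δ)
  have H4 := (hI ((a - 1) * Δ) (b * Δ)).const_mul (2 : ℝ)
  have H5 := (hI ((a - 1) * Δ) ((b - 2) * Δ)).const_mul (4 : ℝ)
  have H6 := (hI ((a - 1) * Δ) ((b - 4) * Δ)).const_mul (2 : ℝ)
  have H7 := hI ((a - 2) * Δ) (b * Δ)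
  have H8 := (hI ((a - 2) * Δ) ((b - 2) * Δ)).const_mul (2 : ℝ)
  have H9 := hI ((a - 2) * Δ) ((b - 4) * Δ)
  have K1 : Integrable (fun ω => B (a * Δ) ω * B (b * Δ) ω
      - 2 * (B (a * Δ) ω * B ((b - 2) * Δ) ω)) P := H1.sub H2
  have K2 : Integrable (fun ω => B (a * Δ) ω * B (b * Δ) ω
      - 2 * (B (a * Δ) ω * B ((b - 2) * Δ) ω) + B (a * Δ) ω * B ((b - 4) * Δ) ω) P := K1.add H3
  have K3 : Integrable (fun ω => B (a * Δ) ω * B (b * Δ) ω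
      - 2 * (B (a * Δ) ω * B ((b - 2) * Δ) ω) + B (a * Δ) ω * B ((b - 4) * Δ) ω
      - 2 * (B ((a - 1) * Δ) ω * B (b * Δ) ω)) P := K2.sub H4
  have K4 : Integrable (fun ω => B (a * Δ) ω * B (b * Δ) ω
      - 2 * (B (a * Δ) ω * B ((b - 2) * Δ) ω) + B (a * Δ) ω * B ((b - 4) * Δ) ω
      - 2 * (B ((a - 1) * Δ) ω * B (b * Δ) ω)
      + 4 * (B ((a - 1) * Δ) ω * B ((b - 2) * Δ) ω)) P := K3.add H5
  have K5 : Integrable (fun ω => B (a * Δ) ω * B (b * Δ) ω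
      - 2 * (B (a * Δ) ω * B ((b - 2) * Δ) ω) + B (a * Δ) ω * B ((b - 4) * Δ) ω
      - 2 * (B ((a - 1) * Δ) ω * B (b * Δ) ω)
      + 4 * (B ((a - 1) * Δ) ω * B ((b - 2) * Δ) ω)
      - 2 * (B ((a - 1) * Δ) ω * B ((b - 4) * Δ) ω)) P := K4.sub H6
  have K6 : Integrable (fun ω => B (a * Δ) ω * B (b * Δ) ω
      - 2 * (B (a * Δ) ω * B ((b - 2) * Δ) ω) + B (a * Δ) ω * B ((b - 4) * Δ) ω
      - 2 * (B ((a - 1) * Δ) ω * B (b * Δ) ω)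
      + 4 * (B ((a - 1) * Δ) ω * B ((b - 2) * Δ) ω)
      - 2 * (B ((a - 1) * Δ) ω * B ((b - 4) * Δ) ω)
      + B ((a - 2) * Δ) ω * B (b * Δ) ω) P := K5.add H7
  have K7 : Integrable (fun ω => B (a * Δ) ω * B (b * Δ) ω
      - 2 * (B (a * Δ) ω * B ((b - 2) * Δ) ω) + B (a * Δ) ω * B ((b - 4) * Δ) ω
      - 2 * (B ((a - 1) * Δ) ω * B (b * Δ) ω)
      + 4 * (B ((a - 1) * Δ) ω * B ((b - 2) * Δ) ω)
      - 2 * (B ((a - 1) * Δ) ω * B ((b - 4) * Δ) ω)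
      + B ((a - 2) * Δ) ω * B (b * Δ) ω
      - 2 * (B ((a - 2) * Δ) ω * B ((b - 2) * Δ) ω)) P := K6.sub H8
  rw [integral_add K7 H9, integral_sub K6 H8, integral_add K5 H7, integral_sub K4 H6,
      integral_add K3 H5, integral_sub K2 H4, integral_add K1 H3, integral_sub H1 H2]
  simp only [integral_const_mul]
  simp only [key]
  have d2 : a - (b - 2) = a - b + 2 := by ring
  have d3 : a - (b - 4) = a - b + 4 := by ring
  have d4 : a - 1 - b = a - b - 1 := by ring
  have d5 : a - 1 - (b - 2) = a - b + 1 := by ring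
  have d6 : a - 1 - (b - 4) = a - b + 3 := by ring
  have d7 : a - 2 - b = a - b - 2 := by ring
  have d8 : a - 2 - (b - 2) = a - b := by ring
  have d9 : a - 2 - (b - 4) = a - b + 2 := by ring
  rw [d2, d3, d4, d5, d6, d7, d8, d9]
  ring
end

section
/- For every H ∈ (0,1), the squared autocorrelation sequence of lag-1 second-order fractional Brownian increments is summable: the series Σ_{h=1}^{∞} d_H(h)² converges, where d_H(h) = −|h−2|^{2H} + 4|h−1|^{2H} − 6|h|^{2H} + 4|h+1|^{2H} − |h+2|^{2H}. Equivalently, Σ_{h=1}^{∞} ρ^H_{1,1}(h)² < ∞ with ρ^H_{1,1}(h) = d_H(h)/(2(4 − 2^{2H})). -/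
/-- The autocovariance numerator of lag-1 second-order fractional Brownian
increments with Hurst index `H`. -/
noncomputable def dH (H : ℝ) (h : ℤ) : ℝ :=
  -(|(h : ℝ) - 2| ^ (2 * H)) + 4 * |(h : ℝ) - 1| ^ (2 * H) - 6 * |(h : ℝ)| ^ (2 * H)
    + 4 * |(h : ℝ) + 1| ^ (2 * H) - |(h : ℝ) + 2| ^ (2 * H)

open Set

private lemma mvt1 (F F' : ℝ → ℝ) (a : ℝ)
    (h : ∀ x ∈ Set.Icc a (a + 1), HasDerivAt F (F' x) x) :
    ∃ c ∈ Set.Ioo a (a + 1), F (a + 1) - F a = F' c := by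
  have hab : a < a + 1 := by linarith
  obtain ⟨c, hc, he⟩ := exists_hasDerivAt_eq_slope F F' hab
    (fun x hx => (h x hx).continuousAt.continuousWithinAt)
    (fun x hx => h x (Set.mem_Icc_of_Ioo hx))
  refine ⟨c, hc, ?_⟩
  rw [he, add_sub_cancel_left, div_one]

private lemma hshift (p a : ℝ) {x : ℝ} (hx : 0 < x + a) :
    HasDerivAt (fun y : ℝ => (y + a) ^ p) (1 * p * (x + a) ^ (p - 1)) x :=
  ((hasDerivAt_id x).add_const a).rpow_const (Or.inl (ne_of_gt hx))

private lemma key (p : ℝ) {x : ℝ} (hx : 1 ≤ x) :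
    ∃ c ∈ Set.Ioo x (x + 3),
      (x+4)^p - 4*(x+3)^p + 6*(x+2)^p - 4*(x+1)^p + x^p
        = p * (p-1) * (p-2) * ((c+1) ^ (p-3) - c ^ (p-3)) := by
  have hx0 : (0:ℝ) < x := by linarith
  -- Level 1
  obtain ⟨c₁, hc₁, h1⟩ := mvt1
    (fun y => (y+3)^p - 3*(y+2)^p + 3*(y+1)^p - y^p)
    (fun y => 1*p*(y+3)^(p-1) - 3*(1*p*(y+2)^(p-1)) + 3*(1*p*(y+1)^(p-1)) - 1*p*y^(p-1))
    x (by
      intro y hy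
      have hy0 : (0:ℝ) < y := by have := hy.1; linarith
      exact (((hshift p 3 (by linarith)).sub ((hshift p 2 (by linarith)).const_mul 3)).add
        ((hshift p 1 (by linarith)).const_mul 3)).sub
        (by simpa using hshift p 0 (by simpa using hy0)))
  have hc₁0 : (0:ℝ) < c₁ := lt_trans hx0 hc₁.1
  -- Level 2
  obtain ⟨c₂, hc₂, h2⟩ := mvt1
    (fun y => (y+2)^(p-1) - 2*(y+1)^(p-1) + y^(p-1))
    (fun y => 1*(p-1)*(y+2)^(p-1-1) - 2*(1*(p-1)*(y+1)^(p-1-1)) + 1*(p-1)*y^(p-1-1))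
    c₁ (by
      intro y hy
      have hy0 : (0:ℝ) < y := by have := hy.1; linarith
      exact ((hshift (p-1) 2 (by linarith)).sub ((hshift (p-1) 1 (by linarith)).const_mul 2)).add
        (by simpa using hshift (p-1) 0 (by simpa using hy0)))
  have hc₂0 : (0:ℝ) < c₂ := lt_trans hc₁0 hc₂.1
  -- Level 3
  obtain ⟨c₃, hc₃, h3⟩ := mvt1
    (fun y => (y+1)^(p-1-1) - y^(p-1-1))
    (fun y => 1*(p-1-1)*(y+1)^(p-1-1-1) - 1*(p-1-1)*y^(p-1-1-1))
    c₂ (by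
      intro y hy
      have hy0 : (0:ℝ) < y := by have := hy.1; linarith
      exact (hshift (p-1-1) 1 (by linarith)).sub
        (by simpa using hshift (p-1-1) 0 (by simpa using hy0)))
  refine ⟨c₃, ⟨lt_trans hc₁.1 (lt_trans hc₂.1 hc₃.1), by
    have := hc₃.2; have := hc₂.2; have := hc₁.2; linarith⟩, ?_⟩
  have e1 : (x+4)^p - 4*(x+3)^p + 6*(x+2)^p - 4*(x+1)^p + x^p
      = p * ((c₁+3)^(p-1) - 3*(c₁+2)^(p-1) + 3*(c₁+1)^(p-1) - c₁^(p-1)) := by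
    have : x + 1 + 3 = x + 4 := by ring
    rw [this] at h1
    have : x + 1 + 2 = x + 3 := by ring
    rw [this] at h1
    have : x + 1 + 1 = x + 2 := by ring
    rw [this] at h1
    linarith [h1]
  have e2 : (c₁+3)^(p-1) - 3*(c₁+2)^(p-1) + 3*(c₁+1)^(p-1) - c₁^(p-1)
      = (p-1) * ((c₂+2)^(p-1-1) - 2*(c₂+1)^(p-1-1) + c₂^(p-1-1)) := by
    have : c₁ + 1 + 2 = c₁ + 3 := by ring
    rw [this] at h2
    have : c₁ + 1 + 1 = c₁ + 2 := by ring
    rw [this] at h2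
    linarith [h2]
  have e3 : (c₂+2)^(p-1-1) - 2*(c₂+1)^(p-1-1) + c₂^(p-1-1)
      = (p-1-1) * ((c₃+1)^(p-1-1-1) - c₃^(p-1-1-1)) := by
    have : c₂ + 1 + 1 = c₂ + 2 := by ring
    rw [this] at h3
    linarith [h3]
  have ep : p - 1 - 1 = p - 2 := by ring
  have ep3 : p - 1 - 1 - 1 = p - 3 := by ring
  rw [e1, e2, e3, ep3, ep]
  ring

/-- The main bound: for `h ≥ 3`, `|dH H h| ≤ 4 / (h - 2)`. -/
private lemma dH_bound (H : ℝ) (hH : H ∈ Set.Ioo (0:ℝ) 1) {h : ℤ} (hh : 3 ≤ h) :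
    |dH H h| ≤ 4 / ((h : ℝ) - 2) := by
  obtain ⟨hH0, hH1⟩ := hH
  set p := 2 * H with hp
  have hp0 : 0 < p := by positivity
  have hp2 : p < 2 := by simp [hp]; linarith
  set x : ℝ := (h : ℝ) - 2 with hxdef
  have hx : (1:ℝ) ≤ x := by
    have : (3:ℝ) ≤ (h:ℝ) := by exact_mod_cast hh
    simp [hxdef]; linarith
  have hx0 : (0:ℝ) < x := by linarith
  have hdh : dH H h = -((x+4)^p - 4*(x+3)^p + 6*(x+2)^p - 4*(x+1)^p + x^p) := by
    have h2 : |(h:ℝ) - 2| = x := abs_of_nonneg (by linarith)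
    have h1 : |(h:ℝ) - 1| = x + 1 := by rw [abs_of_nonneg (by linarith)]; ring
    have h0 : |(h:ℝ)| = x + 2 := by rw [abs_of_nonneg (by linarith)]; ring
    have hm1 : |(h:ℝ) + 1| = x + 3 := by rw [abs_of_nonneg (by linarith)]; ring
    have hm2 : |(h:ℝ) + 2| = x + 4 := by rw [abs_of_nonneg (by linarith)]; ring
    rw [dH, h2, h1, h0, hm1, hm2]; ring
  obtain ⟨c, hc, hkey⟩ := key p hx
  have hc0 : 0 < c := lt_trans hx0 hc.1
  rw [hdh, abs_neg, hkey, abs_mul]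
  have hcoef : |p * (p-1) * (p-2)| ≤ 4 := by
    rw [abs_mul, abs_mul]
    have a1 : |p| ≤ 2 := by rw [abs_of_pos hp0]; linarith
    have a2 : |p - 1| ≤ 1 := abs_le.2 ⟨by linarith, by linarith⟩
    have a3 : |p - 2| ≤ 2 := abs_le.2 ⟨by linarith, by linarith⟩
    calc |p| * |p-1| * |p-2| ≤ 2 * 1 * 2 := by
          apply mul_le_mul (mul_le_mul a1 a2 (abs_nonneg _) (by norm_num)) a3
            (abs_nonneg _) (by norm_num)
      _ = 4 := by norm_num
  have hdiff : |(c+1) ^ (p-3) - c ^ (p-3)| ≤ 1 / x := by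
    have hmono : (c+1) ^ (p-3) ≤ c ^ (p-3) :=
      Real.rpow_le_rpow_of_nonpos hc0 (by linarith) (by linarith)
    have hpos : (0:ℝ) < (c+1) ^ (p-3) := Real.rpow_pos_of_pos (by linarith) _
    have h1 : |(c+1) ^ (p-3) - c ^ (p-3)| ≤ c ^ (p-3) := by
      rw [abs_of_nonpos (by linarith)]
      linarith
    have h2 : c ^ (p-3) ≤ x ^ (p-3) :=
      Real.rpow_le_rpow_of_nonpos hx0 (le_of_lt hc.1) (by linarith)
    have h3 : x ^ (p-3) ≤ x ^ (-1 : ℝ) :=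
      Real.rpow_le_rpow_of_exponent_le hx (by linarith)
    have h4 : x ^ (-1 : ℝ) = 1 / x := by
      rw [Real.rpow_neg_one]; exact (one_div x).symm
    linarith
  calc |p * (p-1) * (p-2)| * |(c+1) ^ (p-3) - c ^ (p-3)|
      ≤ 4 * (1 / x) := mul_le_mul hcoef hdiff (abs_nonneg _) (by norm_num)
    _ = 4 / x := by ring

/-- Summability of the squared autocorrelations of lag-1 second-order
fractional Brownian increments. -/
theorem fbm_squared_autocorrelation_summable
    (H : ℝ) (hH : H ∈ Set.Ioo (0 : ℝ) 1) :
    Summable (fun h : ℕ => (dH H ((h : ℤ) + 1)) ^ 2)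
      ∧ Summable (fun h : ℕ =>
          (dH H ((h : ℤ) + 1) / (2 * (4 - (2 : ℝ) ^ (2 * H)))) ^ 2) := by
  have hmain : Summable (fun h : ℕ => (dH H ((h : ℤ) + 1)) ^ 2) := by
    rw [← summable_nat_add_iff 2]
    have hmaj : Summable (fun h : ℕ => 16 * (1 / ((h : ℝ) + 1) ^ 2)) := by
      apply Summable.mul_left
      have := (summable_nat_add_iff (f := fun n : ℕ => 1 / (n : ℝ) ^ 2) 1).2
        (Real.summable_one_div_nat_pow.2 (by norm_num))
      simpa using this
    apply Summable.of_nonneg_of_le (fun h => sq_nonneg _) _ hmaj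
    intro h
    have hb : |dH H ((↑(h + 2) : ℤ) + 1)| ≤ 4 / ((h : ℝ) + 1) := by
      have := dH_bound H hH (h := (h : ℤ) + 3) (by omega)
      have hc : ((h : ℤ) + 3 : ℤ) = ((↑(h + 2) : ℤ) + 1) := by push_cast; ring
      rw [hc] at this
      have hd : ((((↑(h + 2) : ℤ) + 1 : ℤ)) : ℝ) - 2 = (h : ℝ) + 1 := by push_cast; ring
      rwa [hd] at this
    have hnn : (0:ℝ) < (h:ℝ) + 1 := by positivity
    calc (dH H ((↑(h + 2) : ℤ) + 1)) ^ 2 = |dH H ((↑(h + 2) : ℤ) + 1)| ^ 2 := (sq_abs _).symm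
      _ ≤ (4 / ((h : ℝ) + 1)) ^ 2 := by
          apply pow_le_pow_left₀ (abs_nonneg _) hb
      _ = 16 * (1 / ((h : ℝ) + 1) ^ 2) := by field_simp; ring
  refine ⟨hmain, ?_⟩
  simp only [div_pow]
  exact hmain.div_const _
end
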